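/- For the decatic potential V(x) = ax¹⁰ + cx⁶ (with a > 0, c ≠ 0 real, b = d = e = 0), there exist no real E and no nonzero polynomial χ such that ψ(x) = χ(x)·exp(-(√a/6)x⁶ + (c/(4√a))x²) satisfies -ψ'' + Vψ = Eψ for all real x. -/

import Mathlib

open Polynomial

theorem no_quasi_exact_solution_for_ax10_plus_cx6
    (a c : ℝ) (ha : 0 < a) (hc : c ≠ 0) :
    ¬ ∃ (E : ℝ) (χ : Polynomial ℝ), χ ≠ 0 ∧ ∀ x : ℝ,
      -(deriv (deriv (fun x : ℝ => χ.eval x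
          * Real.exp (-(Real.sqrt a / 6) * x ^ 6 + (c / (4 * Real.sqrt a)) * x ^ 2))) x)
      + (a * x ^ 10 + c * x ^ 6)
          * (χ.eval x * Real.exp (-(Real.sqrt a / 6) * x ^ 6 + (c / (4 * Real.sqrt a)) * x ^ 2))
      = E * (χ.eval x
          * Real.exp (-(Real.sqrt a / 6) * x ^ 6 + (c / (4 * Real.sqrt a)) * x ^ 2)) := by
  rintro ⟨E, χ, hχ, hode⟩
  have hs0 : 0 < Real.sqrt a := Real.sqrt_pos.2 ha
  set s : ℝ := Real.sqrt a with hs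
  have hsa : s ^ 2 = a := Real.sq_sqrt ha.le
  set F : ℝ[X] := C (-s) * X ^ 5 + C (c / (2 * s)) * X with hF
  have hφ : ∀ x : ℝ, HasDerivAt
      (fun x : ℝ => -(s / 6) * x ^ 6 + (c / (4 * s)) * x ^ 2) (F.eval x) x := by
    intro x
    have h1 := (hasDerivAt_pow 6 x).const_mul (-(s / 6))
    have h2 := (hasDerivAt_pow 2 x).const_mul (c / (4 * s))
    have h : HasDerivAt (fun x : ℝ => -(s / 6) * x ^ 6 + (c / (4 * s)) * x ^ 2) _ x := h1.add h2
    convert h using 1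
    simp [hF]
    field_simp
    ring
  have key : ∀ p : ℝ[X],
      deriv (fun x : ℝ => p.eval x * Real.exp (-(s / 6) * x ^ 6 + (c / (4 * s)) * x ^ 2))
      = fun x : ℝ => (p.derivative + p * F).eval x
          * Real.exp (-(s / 6) * x ^ 6 + (c / (4 * s)) * x ^ 2) := by
    intro p
    funext x
    have h := (p.hasDerivAt x).mul ((hφ x).exp)
    rw [show deriv (fun x : ℝ => p.eval x * Real.exp (-(s / 6) * x ^ 6 + (c / (4 * s)) * x ^ 2)) x = _ from h.deriv]
    simp
    ring
  simp only [key] at hode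
  set q : ℝ[X] := χ.derivative + χ * F with hq
  set Q : ℝ[X] := -(q.derivative + q * F) + (C a * X ^ 10 + C c * X ^ 6) * χ - C E * χ
    with hQ
  have hQ0 : ∀ x : ℝ, Q.eval x = 0 := by
    intro x
    have h := hode x
    have he : Real.exp (-(s / 6) * x ^ 6 + (c / (4 * s)) * x ^ 2) ≠ 0 := Real.exp_ne_zero _
    have h2 : Q.eval x * Real.exp (-(s / 6) * x ^ 6 + (c / (4 * s)) * x ^ 2) = 0 := by
      simp only [eval_add, eval_mul] at h
      simp only [hQ, eval_sub, eval_add, eval_neg, eval_mul, eval_pow, eval_C, eval_X]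
      linear_combination h
    exact (mul_eq_zero.mp h2).resolve_right he
  have hQzero : Q = 0 := by
    apply Polynomial.funext
    intro x
    simpa using hQ0 x
  -- explicit form of F^2
  have hu : s * (c / (2 * s)) = c / 2 := by field_simp
  have hF2 : F ^ 2 = C a * X ^ 10 - C c * X ^ 6 + C ((c / (2 * s)) ^ 2) * X ^ 2 := by
    have h1 : (C a : ℝ[X]) = C s * C s := by rw [← C_mul]; rw [← hsa]; ring_nf
    have h2 : (C c : ℝ[X]) = C s * C (c / (2 * s)) + C s * C (c / (2 * s)) := by
      simp only [← C_mul, ← C_add]; congr 1; rw [hu]; ring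
    rw [hF, h1, h2]
    have h3 : (C ((c / (2 * s)) ^ 2) : ℝ[X]) = C (c / (2 * s)) * C (c / (2 * s)) := by
      rw [← C_mul]; ring_nf
    rw [h3]
    simp only [map_neg]
    ring
  -- grouped form of Q
  have hQform : Q = C (2 * c) * (X ^ 6 * χ) - C ((c / (2 * s)) ^ 2) * (X ^ 2 * χ)
      - χ.derivative.derivative - (χ.derivative * F + χ.derivative * F)
      - χ * F.derivative - C E * χ := by
    have hc2 : (C (2 * c) : ℝ[X]) = 2 * C c := by
      rw [C_mul, map_ofNat]
    rw [hQ, hq, derivative_add, derivative_mul, hc2]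
    linear_combination (-χ) * hF2
  -- now compute the coefficient at χ.natDegree + 6
  set n : ℕ := χ.natDegree with hn
  have hdF : F.natDegree ≤ 5 := by rw [hF]; compute_degree
  have hb1 : (χ.derivative.derivative).natDegree < n + 6 := by
    have := χ.derivative.natDegree_derivative_le
    have := χ.natDegree_derivative_le
    omega
  have hb2 : (χ.derivative * F).natDegree < n + 6 := by
    have h := natDegree_mul_le (p := χ.derivative) (q := F)
    have := χ.natDegree_derivative_le
    omega
  have hb3 : (χ * F.derivative).natDegree < n + 6 := by
    have h := natDegree_mul_le (p := χ) (q := F.derivative)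
    have := F.natDegree_derivative_le
    omega
  have hb4 : (C E * χ).natDegree < n + 6 := by
    have h := natDegree_mul_le (p := (C E : ℝ[X])) (q := χ)
    have : (C E : ℝ[X]).natDegree = 0 := natDegree_C E
    omega
  have hb5 : (C ((c / (2 * s)) ^ 2) * (X ^ 2 * χ)).natDegree < n + 6 := by
    have h := natDegree_mul_le (p := (C ((c / (2 * s)) ^ 2) : ℝ[X])) (q := X ^ 2 * χ)
    have h2 := natDegree_mul_le (p := (X ^ 2 : ℝ[X])) (q := χ)
    have h3 : (C ((c / (2 * s)) ^ 2) : ℝ[X]).natDegree = 0 := natDegree_C _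
    have h4 : (X ^ 2 : ℝ[X]).natDegree ≤ 2 := natDegree_X_pow_le 2
    omega
  have hcoeff : Q.coeff (n + 6) = 2 * c * χ.coeff n := by
    rw [hQform]
    rw [coeff_sub, coeff_sub, coeff_sub, coeff_sub, coeff_sub, coeff_add]
    rw [coeff_eq_zero_of_natDegree_lt hb1, coeff_eq_zero_of_natDegree_lt hb2,
      coeff_eq_zero_of_natDegree_lt hb3, coeff_eq_zero_of_natDegree_lt hb4,
      coeff_eq_zero_of_natDegree_lt hb5]
    rw [coeff_C_mul, coeff_X_pow_mul]
    ring
  rw [hQzero, coeff_zero] at hcoeff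
  have h2c : (2 : ℝ) * c ≠ 0 := mul_ne_zero two_ne_zero hc
  have hlead : χ.coeff n = 0 := (mul_eq_zero.mp hcoeff.symm).resolve_left h2c
  exact hχ (Polynomial.leadingCoeff_eq_zero.mp hlead)
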